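/- Let R = μ₀R⁰ + Σ_{i=1}^m μᵢR^{Jᵢ} be a quasi-Clifford algebraic curvature tensor on a scalar product space (V,g). Suppose X ∈ V is nonnull, Y ∈ V satisfies 𝒥_X(Y) = ε_X·μ₀·Y, and the family (X, J₁X, …, J_mX) is linearly independent. Then μ₀·g(Y,X) = 0 and μᵢ·g(Y,JᵢX) = 0 for all 1 ≤ i ≤ m, and consequently 𝒥_Y(X) = ε_Y·μ₀·X, so X is an eigenvector of 𝒥_Y. -/

import Mathlib

open Module Finset

/-- The algebraic curvature tensor `R⁰` of constant sectional curvature one. -/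
def R0 {V : Type*} [AddCommGroup V] [Module ℝ V] (g : LinearMap.BilinForm ℝ V)
    (X Y Z W : V) : ℝ :=
  g Y Z * g X W - g X Z * g Y W

/-- The algebraic curvature tensor `R^J` generated by a `g`-skew-adjoint endomorphism `J`. -/
def RJ {V : Type*} [AddCommGroup V] [Module ℝ V] (g : LinearMap.BilinForm ℝ V)
    (J : V →ₗ[ℝ] V) (X Y Z W : V) : ℝ :=
  g (J X) Z * g (J Y) W - g (J Y) Z * g (J X) W + 2 * g (J X) Y * g (J Z) W
/-- for a quasi-Clifford curvature tensor, a nonnull `X` and `Y` with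
`𝒥_X(Y) = ε_X μ₀ Y`, if the family `(X, J₁X, …, J_mX)` is linearly independent then
`μ₀ g(Y,X) = 0`, `μᵢ g(Y,JᵢX) = 0`, and consequently `𝒥_Y(X) = ε_Y μ₀ X`, so `X`
is an eigenvector of `𝒥_Y`. -/
theorem quasiClifford_dual_exceptional_eigenvalue
    {V : Type*} [AddCommGroup V] [Module ℝ V] [FiniteDimensional ℝ V]
    (g : LinearMap.BilinForm ℝ V) (hsymm : ∀ x y, g x y = g y x) (hnd : g.Nondegenerate)
    {m : ℕ} (μ₀ : ℝ) (μ c : Fin m → ℝ) (J : Fin m → V →ₗ[ℝ] V)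
    (hskew : ∀ i, ∀ x y : V, g (J i x) y = - g x (J i y))
    (hhur : ∀ i j, J i ∘ₗ J j + J j ∘ₗ J i
      = ((if i = j then 2 * c i else 0 : ℝ) • LinearMap.id : V →ₗ[ℝ] V))
    (R : V → V → V → V → ℝ)
    (hR : ∀ X Y Z W, R X Y Z W = μ₀ * R0 g X Y Z W + ∑ i, μ i * RJ g (J i) X Y Z W)
    (Jac : V → V →ₗ[ℝ] V)
    (hJac : ∀ X Y Z, g (Jac X Y) Z = R Y X X Z)
    (X Y : V) (hX : g X X ≠ 0) (hY : Jac X Y = (g X X * μ₀) • Y)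
    (hli : LinearIndependent ℝ (Fin.cons X (fun i : Fin m => J i X) : Fin (m + 1) → V)) :
    μ₀ * g Y X = 0 ∧ (∀ i, μ i * g Y (J i X) = 0) ∧
      Jac Y X = (g Y Y * μ₀) • X ∧
      ∃ lam : ℝ, Module.End.HasEigenvector (Jac Y) lam X := by
  have hJXX : ∀ i, g (J i X) X = 0 := by
    intro i
    have h1 := hskew i X X
    have h2 := hsymm X (J i X)
    linarith
  have hJYX : ∀ i, g (J i Y) X = - g Y (J i X) := by
    intro i; rw [hskew i Y X]
  -- key identity
  have key : ∀ Z, (μ₀ * g Y X) * g X Z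
      + ∑ i, (3 * (μ i * g Y (J i X))) * g (J i X) Z = 0 := by
    intro Z
    have h := hJac X Y Z
    rw [hY, hR] at h
    simp only [map_smul, LinearMap.smul_apply, smul_eq_mul, R0] at h
    have h2 : ∑ i, μ i * RJ g (J i) Y X X Z
        = ∑ i, -((3 * (μ i * g Y (J i X))) * g (J i X) Z) := by
      refine Finset.sum_congr rfl fun i _ => ?_
      simp only [RJ, hJXX i, hJYX i]
      ring
    rw [h2, Finset.sum_neg_distrib] at h
    linarith
  set co : Fin (m + 1) → ℝ :=
    Fin.cons (μ₀ * g Y X) (fun i => 3 * (μ i * g Y (J i X))) with hco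
  have hv : ∑ k, co k • (Fin.cons X (fun i : Fin m => J i X) : Fin (m + 1) → V) k = 0 := by
    apply hnd.1
    intro Z
    rw [Fin.sum_univ_succ]
    simp only [Fin.cons_zero, Fin.cons_succ, hco]
    simp only [map_add, map_smul, map_sum, LinearMap.add_apply, LinearMap.smul_apply,
      LinearMap.sum_apply, smul_eq_mul, LinearMap.zero_apply]
    exact key Z
  have hcz : ∀ k, co k = 0 :=
    (Fintype.linearIndependent_iff.mp hli) co hv
  have h0 : μ₀ * g Y X = 0 := hcz 0
  have hi : ∀ i, μ i * g Y (J i X) = 0 := by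
    intro i
    have := hcz i.succ
    simp only [hco, Fin.cons_succ] at this
    linarith
  have hXY0 : μ₀ * g X Y = 0 := by rw [hsymm X Y]; exact h0
  have hJi0 : ∀ i, μ i * g (J i X) Y = 0 := by
    intro i; rw [hsymm (J i X) Y]; exact hi i
  have hJYY : ∀ i, g (J i Y) Y = 0 := by
    intro i
    have h1 := hskew i Y Y
    have h2 := hsymm Y (J i Y)
    linarith
  have h3 : Jac Y X = (g Y Y * μ₀) • X := by
    have hz : ∀ Z, g (Jac Y X - (g Y Y * μ₀) • X) Z = 0 := by
      intro Z
      have h := hJac Y X Z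
      rw [hR] at h
      have h2 : ∑ i, μ i * RJ g (J i) X Y Y Z = 0 := by
        refine Finset.sum_eq_zero fun i _ => ?_
        have := hJi0 i
        simp only [RJ, hJYY i]
        linear_combination (3 * g (J i Y) Z) * hJi0 i
      rw [h2] at h
      simp only [map_sub, map_smul, LinearMap.sub_apply, LinearMap.smul_apply, smul_eq_mul, h,
        R0]
      linear_combination (- g Y Z) * hXY0
    exact sub_eq_zero.mp (hnd.1 _ hz)
  refine ⟨h0, hi, h3, ⟨g Y Y * μ₀, ?_, fun hX0 => hX (by rw [hX0]; simp)⟩⟩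
  exact Module.End.mem_eigenspace_iff.mpr h3
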